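/- Let k be a field of characteristic 0, V a k-vector space, and b : V × V → V an alternating k-bilinear map. For each n ≥ 1 let d_n : ⋀ⁿV → ⋀ⁿ⁻¹V be the k-linear map determined by d_n(v₁∧⋯∧vₙ) = Σ_{1≤i<j≤n} (−1)^{i+j} b(vᵢ,vⱼ) ∧ v₁∧⋯∧v̂ᵢ∧⋯∧v̂ⱼ∧⋯∧vₙ (a hat means the factor is omitted; d₁ = 0). Then d_{n−1} ∘ d_n = 0 for all n ≥ 2 if and only if b satisfies the Jacobi identity b(b(x,y),z) + b(b(y,z),x) + b(b(z,x),y) = 0 for all x, y, z ∈ V. -/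

import Mathlib

/-!
STATEMENT 0: For `b : V × V → V` an alternating `k`-bilinear map on a vector space `V` over a
field `k` of characteristic `0`, let `d n : ⋀ⁿV → ⋀ⁿ⁻¹V` be the `k`-linear maps determined by
`d n (v₁∧⋯∧vₙ) = Σ_{i<j} (−1)^{i+j} b(vᵢ,vⱼ) ∧ v₁∧⋯∧v̂ᵢ∧⋯∧v̂ⱼ∧⋯∧vₙ`.
Then `d (n−1) ∘ d n = 0` for all `n ≥ 2` iff `b` satisfies the Jacobi identity.

We work inside the exterior algebra `⋀V = ExteriorAlgebra k V`, where the `n`-th exterior power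
is the span of the products `ι v₁ * ⋯ * ι vₙ`; such a family `d` of linear maps is hypothesized
together with its defining formula on these generators (indices are `0`-based, so the sign
`(−1)^{i+j}` for the `1`-based indexing of the statement is again `(−1)^{i+j}`).
-/

namespace CEAux

open ExteriorAlgebra

theorem ofFn_eraseIdx {α : Type*} : ∀ {n : ℕ} (f : Fin (n + 1) → α) (i : Fin (n + 1)),
    (List.ofFn f).eraseIdx (i : ℕ) = List.ofFn (f ∘ i.succAbove) := by
  intro n
  induction n with
  | zero =>
    intro f i
    fin_cases i
    simp
  | succ n ih =>
    intro f i
    induction i using Fin.cases with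
    | zero => simp
    | succ j =>
      rw [List.ofFn_succ, Fin.val_succ, List.eraseIdx_cons_succ, ih (fun l => f l.succ) j,
        List.ofFn_succ]
      simp [Function.comp_def, Fin.succ_succAbove_succ, Fin.succ_succAbove_zero]

variable {k V : Type*} [Field k] [AddCommGroup V] [Module k V]

theorem ι_swap (a c : V) : ι k a * ι k c = -(ι k c * ι k a) :=
  eq_neg_of_add_eq_zero_left (ι_add_mul_swap a c)

theorem anti3 (a c : V) (q : ExteriorAlgebra k V) :
    ι k a * (ι k c * q) = -(ι k c * (ι k a * q)) := by
  rw [← mul_assoc, ← mul_assoc, ι_swap, neg_mul]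

theorem skew (b : V →ₗ[k] V →ₗ[k] V) (hb : ∀ v : V, b v v = 0) (p q : V) :
    b p q = - b q p := by
  have h := hb (p + q)
  simp only [map_add, LinearMap.add_apply, hb p, hb q, zero_add, add_zero] at h
  exact eq_neg_of_add_eq_zero_right h

section theta

variable (b : V →ₗ[k] V →ₗ[k] V) (hb : ∀ v : V, b v v = 0)

/-- The linear map `v ↦ [[ι v, 0], [ι (b x v), ι v]]`. -/
noncomputable def thetaGen (x : V) :
    V →ₗ[k] Matrix (Fin 2) (Fin 2) (ExteriorAlgebra k V) where
  toFun v := !![ι k v, 0; ι k (b x v), ι k v]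
  map_add' u w := by
    ext i j
    fin_cases i <;> fin_cases j <;>
      simp [Matrix.add_apply, map_add]
  map_smul' c u := by
    ext i j
    fin_cases i <;> fin_cases j <;>
      simp [Matrix.smul_apply, map_smul]

theorem thetaGen_sq (x v : V) : thetaGen b x v * thetaGen b x v = 0 := by
  show (!![ι k v, 0; ι k (b x v), ι k v] : Matrix (Fin 2) (Fin 2) (ExteriorAlgebra k V))
      * !![ι k v, 0; ι k (b x v), ι k v] = 0
  rw [Matrix.mul_fin_two]
  have h0 : ι k (b x v) * ι k v + ι k v * ι k (b x v) = 0 := ι_add_mul_swap _ _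
  ext i j
  fin_cases i <;> fin_cases j <;>
    simp [ι_sq_zero, h0]

/-- The algebra morphism to 2×2 matrices encoding the derivation `θₓ`. -/
noncomputable def thetaAlg (x : V) :
    ExteriorAlgebra k V →ₐ[k] Matrix (Fin 2) (Fin 2) (ExteriorAlgebra k V) :=
  ExteriorAlgebra.lift k ⟨thetaGen b x, thetaGen_sq b x⟩

theorem thetaAlg_ι (x v : V) :
    thetaAlg b x (ι k v) = !![ι k v, 0; ι k (b x v), ι k v] := by
  rw [thetaAlg, ExteriorAlgebra.lift_ι_apply]
  rfl

theorem thetaAlg_diag (x : V) (a : ExteriorAlgebra k V) :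
    thetaAlg b x a 0 0 = a ∧ thetaAlg b x a 0 1 = 0 ∧ thetaAlg b x a 1 1 = a := by
  induction a using ExteriorAlgebra.induction with
  | algebraMap r =>
    rw [AlgHom.commutes]
    simp [Matrix.algebraMap_matrix_apply, Algebra.algebraMap_eq_smul_one]
  | ι v => rw [thetaAlg_ι]; norm_num
  | mul a c ha hc =>
    rw [map_mul]
    simp [Matrix.mul_apply, Fin.sum_univ_two, ha.1, ha.2.1, ha.2.2, hc.1, hc.2.1, hc.2.2]
  | add a c ha hc =>
    rw [map_add]
    simp [Matrix.add_apply, ha.1, ha.2.1, ha.2.2, hc.1, hc.2.1, hc.2.2]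

/-- The derivation `θₓ` of the exterior algebra extending `v ↦ b x v`. -/
noncomputable def theta (x : V) : ExteriorAlgebra k V →ₗ[k] ExteriorAlgebra k V where
  toFun a := thetaAlg b x a 1 0
  map_add' a c := by
    show thetaAlg b x (a + c) 1 0 = thetaAlg b x a 1 0 + thetaAlg b x c 1 0
    rw [map_add]; simp [Matrix.add_apply]
  map_smul' c a := by
    show thetaAlg b x (c • a) 1 0 = c • thetaAlg b x a 1 0
    rw [map_smul]; simp [Matrix.smul_apply]

theorem theta_ι (x v : V) : theta b x (ι k v) = ι k (b x v) := by
  show thetaAlg b x (ι k v) 1 0 = _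
  rw [thetaAlg_ι]
  norm_num

theorem theta_one (x : V) : theta b x 1 = 0 := by
  show thetaAlg b x 1 1 0 = 0
  rw [map_one]
  simp [Matrix.one_apply]

theorem theta_algebraMap (x : V) (r : k) :
    theta b x (algebraMap k (ExteriorAlgebra k V) r) = 0 := by
  show thetaAlg b x (algebraMap k (ExteriorAlgebra k V) r) 1 0 = 0
  rw [AlgHom.commutes]
  simp [Matrix.algebraMap_matrix_apply]

theorem theta_mul (x : V) (a c : ExteriorAlgebra k V) :
    theta b x (a * c) = theta b x a * c + a * theta b x c := by
  have ha := thetaAlg_diag b x a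
  have hc := thetaAlg_diag b x c
  show thetaAlg b x (a * c) 1 0 = thetaAlg b x a 1 0 * c + a * thetaAlg b x c 1 0
  rw [map_mul]
  simp [Matrix.mul_apply, Fin.sum_univ_two, ha.1, ha.2.2, hc.1, hc.2.2, add_comm]

theorem theta_comm (hb : ∀ v : V, b v v = 0) (hj : ∀ x y z : V, b (b x y) z + b (b y z) x + b (b z x) y = 0)
    (x y : V) (a : ExteriorAlgebra k V) :
    theta b x (theta b y a) - theta b y (theta b x a) = theta b (b x y) a := by
  induction a using ExteriorAlgebra.induction with
  | algebraMap r => simp [theta_algebraMap]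
  | ι v =>
    rw [theta_ι, theta_ι, theta_ι, theta_ι, theta_ι, ← map_sub]
    congr 1
    have h := hj x y v
    have s1 : b (b y v) x = - (b x (b y v)) := skew b hb _ _
    have s2 : b v x = - (b x v) := skew b hb _ _
    rw [s1, s2, map_neg, LinearMap.neg_apply, skew b hb (b x v) y] at h
    have : -(b x (b y v) - b y (b x v) - b (b x y) v)
        = b (b x y) v + -b x (b y v) + - -b y (b x v) := by abel
    have h2 : -(b x (b y v) - b y (b x v) - b (b x y) v) = 0 := this.trans h
    have h3 := neg_eq_zero.mp h2
    rw [sub_eq_zero] at h3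
    exact h3
  | mul a c ha hc =>
    rw [sub_eq_iff_eq_add] at ha hc
    simp only [theta_mul, map_add]
    rw [ha, hc]
    simp only [add_mul, mul_add]
    abel
  | add a c ha hc =>
    simp only [map_add]
    rw [← ha, ← hc]
    abel

end theta

section main

variable (k)
variable (b : V →ₗ[k] V →ₗ[k] V) (hb : ∀ v : V, b v v = 0)
variable (d : ℕ → ExteriorAlgebra k V →ₗ[k] ExteriorAlgebra k V)

/-- The span of products of `n` generators. -/
def Sp (n : ℕ) : Submodule k (ExteriorAlgebra k V) :=
  Submodule.span k
    (Set.range fun v : Fin n → V => (List.ofFn fun l => ExteriorAlgebra.ι k (v l)).prod)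

theorem theta_ofFn (x : V) : ∀ {n : ℕ} (v : Fin n → V),
    theta b x (List.ofFn fun l => ι k (v l)).prod
      = ∑ j : Fin n, ((-1 : k) ^ (j : ℕ)) •
          (ι k (b x (v j)) * ((List.ofFn fun l => ι k (v l)).eraseIdx (j : ℕ)).prod) := by
  intro n
  induction n with
  | zero => intro v; simp [theta_one]
  | succ n ih =>
    intro v
    rw [List.ofFn_succ, List.prod_cons, theta_mul, theta_ι, ih (fun l => v l.succ),
      Fin.sum_univ_succ, Finset.mul_sum]
    refine congrArg₂ (· + ·) ?_ (Finset.sum_congr rfl fun j _ => ?_)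
    · simp
    · rw [Fin.val_succ, List.eraseIdx_cons_succ, List.prod_cons, pow_succ, anti3,
        mul_smul_comm]
      simp [mul_neg, neg_smul, smul_neg, neg_neg]

theorem sum_pair_split (n : ℕ) (F : Fin (n + 1) × Fin (n + 1) → ExteriorAlgebra k V)
    (hF : ∀ p, ¬ p.1 < p.2 → F p = 0) :
    ∑ p : Fin (n + 1) × Fin (n + 1), F p
      = (∑ j : Fin n, F (0, j.succ))
        + ∑ i : Fin n, ∑ j : Fin n, F (i.succ, j.succ) := by
  rw [Fintype.sum_prod_type, Fin.sum_univ_succ, Fin.sum_univ_succ]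
  rw [hF (0, 0) (lt_irrefl _), zero_add]
  congr 1
  refine Finset.sum_congr rfl fun i _ => ?_
  rw [Fin.sum_univ_succ, hF (i.succ, 0) (by simp), zero_add]

theorem dR
    (hd : ∀ (n : ℕ) (v : Fin n → V),
      d n (List.ofFn fun l => ExteriorAlgebra.ι k (v l)).prod =
        ∑ p : Fin n × Fin n,
          if p.1 < p.2 then
            ((-1 : k) ^ ((p.1 : ℕ) + (p.2 : ℕ))) •
              (ExteriorAlgebra.ι k (b (v p.1) (v p.2)) *
                (((List.ofFn fun l => ExteriorAlgebra.ι k (v l)).eraseIdx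
                  (p.2 : ℕ)).eraseIdx (p.1 : ℕ)).prod)
          else 0)
    (n : ℕ) (x : V) (v : Fin n → V) :
    d (n + 1) (ι k x * (List.ofFn fun l => ι k (v l)).prod)
      = -(ι k x * d n (List.ofFn fun l => ι k (v l)).prod)
        - theta b x (List.ofFn fun l => ι k (v l)).prod := by
  have hP : (List.ofFn fun l => ι k (Fin.cons x v l)).prod
      = ι k x * (List.ofFn fun l => ι k (v l)).prod := by
    rw [List.ofFn_succ]
    simp [Fin.cons_succ]
  have h := hd (n + 1) (Fin.cons x v)
  rw [hP] at h
  refine h.trans ?_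
  refine (sum_pair_split k n _ (fun p hp => if_neg hp)).trans ?_
  rw [hd n v, theta_ofFn, sub_eq_neg_add]
  congr 1
  · rw [← Finset.sum_neg_distrib]
    refine Finset.sum_congr rfl fun j _ => ?_
    rw [if_pos (Fin.succ_pos j)]
    simp only [Fin.cons_zero, Fin.cons_succ, Fin.val_zero, Fin.val_succ, zero_add,
      List.ofFn_succ, List.eraseIdx_cons_succ, List.eraseIdx_cons_zero, pow_succ,
      mul_neg, mul_one, neg_smul]
  · rw [Fintype.sum_prod_type]
    simp only [Finset.mul_sum, ← Finset.sum_neg_distrib]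
    refine Finset.sum_congr rfl fun i _ => Finset.sum_congr rfl fun j _ => ?_
    by_cases hij : i < j
    · rw [if_pos (by simpa [Fin.succ_lt_succ_iff] using hij), if_pos hij]
      simp only [Fin.cons_zero, Fin.cons_succ, Fin.val_succ, List.ofFn_succ,
        List.eraseIdx_cons_succ, List.prod_cons]
      rw [show (i : ℕ) + 1 + ((j : ℕ) + 1) = ((i : ℕ) + (j : ℕ)) + 2 by ring, pow_add,
        neg_one_sq, mul_one, anti3, smul_neg, mul_smul_comm]
    · rw [if_neg (by simpa [Fin.succ_lt_succ_iff] using hij), if_neg hij]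
      simp

theorem theta_mem (x : V) : ∀ {n : ℕ} (v : Fin n → V),
    theta b x (List.ofFn fun l => ι k (v l)).prod ∈ Sp k n := by
  intro n v
  rw [theta_ofFn]
  refine Submodule.sum_mem _ fun j _ => Submodule.smul_mem _ _ (Submodule.subset_span ?_)
  cases n with
  | zero => exact j.elim0
  | succ m =>
    refine ⟨Fin.cons (b x (v j)) (fun l => v (j.succAbove l)), ?_⟩
    rw [ofFn_eraseIdx (fun l => ι k (v l)) j]
    simp [List.ofFn_succ, Function.comp_def]

theorem d_mem
    (hd : ∀ (n : ℕ) (v : Fin n → V),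
      d n (List.ofFn fun l => ExteriorAlgebra.ι k (v l)).prod =
        ∑ p : Fin n × Fin n,
          if p.1 < p.2 then
            ((-1 : k) ^ ((p.1 : ℕ) + (p.2 : ℕ))) •
              (ExteriorAlgebra.ι k (b (v p.1) (v p.2)) *
                (((List.ofFn fun l => ExteriorAlgebra.ι k (v l)).eraseIdx
                  (p.2 : ℕ)).eraseIdx (p.1 : ℕ)).prod)
          else 0)
    (n : ℕ) (v : Fin n → V) :
    d n (List.ofFn fun l => ι k (v l)).prod ∈ Sp k (n - 1) := by
  rw [hd n v]
  refine Submodule.sum_mem _ fun p _ => ?_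
  by_cases hp : p.1 < p.2
  · rw [if_pos hp]
    refine Submodule.smul_mem _ _ (Submodule.subset_span ?_)
    match n, v, p with
    | 0, v, p => exact p.1.elim0
    | 1, v, p =>
      exact absurd (Fin.lt_def.mp hp) (by have := p.2.isLt; omega)
    | m + 2, v, p =>
      have hij : (p.1 : ℕ) < (p.2 : ℕ) := Fin.lt_def.mp hp
      have hi : (p.1 : ℕ) < m + 1 := by have := p.2.isLt; omega
      refine ⟨Fin.cons (b (v p.1) (v p.2))
        (fun l => v (p.2.succAbove ((⟨(p.1 : ℕ), hi⟩ : Fin (m + 1)).succAbove l))), ?_⟩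
      have e2 := ofFn_eraseIdx ((fun l => ι k (v l)) ∘ p.2.succAbove)
        (⟨(p.1 : ℕ), hi⟩ : Fin (m + 1))
      simp only [Fin.val_mk] at e2
      rw [ofFn_eraseIdx (fun l => ι k (v l)) p.2, e2]
      simp [List.ofFn_succ, Function.comp_def]
  · rw [if_neg hp]
    exact Submodule.zero_mem _

theorem dR'
    (hd : ∀ (n : ℕ) (v : Fin n → V),
      d n (List.ofFn fun l => ExteriorAlgebra.ι k (v l)).prod =
        ∑ p : Fin n × Fin n,
          if p.1 < p.2 then
            ((-1 : k) ^ ((p.1 : ℕ) + (p.2 : ℕ))) •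
              (ExteriorAlgebra.ι k (b (v p.1) (v p.2)) *
                (((List.ofFn fun l => ExteriorAlgebra.ι k (v l)).eraseIdx
                  (p.2 : ℕ)).eraseIdx (p.1 : ℕ)).prod)
          else 0)
    (n : ℕ) (x : V) {W : ExteriorAlgebra k V} (hW : W ∈ Sp k n) :
    d (n + 1) (ι k x * W) = -(ι k x * d n W) - theta b x W := by
  induction hW using Submodule.span_induction with
  | mem w hw =>
    obtain ⟨v, rfl⟩ := hw
    exact dR k b d hd n x v
  | zero => simp
  | add u w hu hw ihu ihw =>
    simp only [mul_add, map_add, ihu, ihw]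
    abel
  | smul c u hu ihu =>
    simp only [mul_smul_comm, map_smul, ihu, smul_sub, smul_neg]

theorem d_zero_one
    (hd : ∀ (n : ℕ) (v : Fin n → V),
      d n (List.ofFn fun l => ExteriorAlgebra.ι k (v l)).prod =
        ∑ p : Fin n × Fin n,
          if p.1 < p.2 then
            ((-1 : k) ^ ((p.1 : ℕ) + (p.2 : ℕ))) •
              (ExteriorAlgebra.ι k (b (v p.1) (v p.2)) *
                (((List.ofFn fun l => ExteriorAlgebra.ι k (v l)).eraseIdx
                  (p.2 : ℕ)).eraseIdx (p.1 : ℕ)).prod)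
          else 0) :
    d 0 (1 : ExteriorAlgebra k V) = 0 := by
  have h := hd 0 (fun l : Fin 0 => (0 : V))
  simpa using h

theorem dE
    (hd : ∀ (n : ℕ) (v : Fin n → V),
      d n (List.ofFn fun l => ExteriorAlgebra.ι k (v l)).prod =
        ∑ p : Fin n × Fin n,
          if p.1 < p.2 then
            ((-1 : k) ^ ((p.1 : ℕ) + (p.2 : ℕ))) •
              (ExteriorAlgebra.ι k (b (v p.1) (v p.2)) *
                (((List.ofFn fun l => ExteriorAlgebra.ι k (v l)).eraseIdx
                  (p.2 : ℕ)).eraseIdx (p.1 : ℕ)).prod)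
          else 0)
    (hb : ∀ v : V, b v v = 0)
    (hj : ∀ x y z : V, b (b x y) z + b (b y z) x + b (b z x) y = 0) :
    ∀ (n : ℕ) (x : V) (W : ExteriorAlgebra k V), W ∈ Sp k n →
      d n (theta b x W) = theta b x (d n W) := by
  intro n
  induction n with
  | zero =>
    intro x W hW
    induction hW using Submodule.span_induction with
    | mem w hw =>
      obtain ⟨v, rfl⟩ := hw
      dsimp only
      have h0 : (List.ofFn fun l => ι k (v l)).prod = 1 := by simp
      rw [h0, theta_one, d_zero_one k b d hd, map_zero, map_zero]
    | zero => simp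
    | add u w hu hw ihu ihw => simp only [map_add, ihu, ihw]
    | smul c u hu ihu => simp only [map_smul, ihu]
  | succ n ih =>
    intro x W hW
    induction hW using Submodule.span_induction with
    | mem w hw =>
      obtain ⟨v, rfl⟩ := hw
      dsimp only
      have hsplit : (List.ofFn fun l => ι k (v l)).prod
          = ι k (v 0) * (List.ofFn fun l => ι k (v l.succ)).prod := by
        rw [List.ofFn_succ, List.prod_cons]
      have hmemP : (List.ofFn fun l => ι k (v l.succ)).prod ∈ Sp k n :=
        Submodule.subset_span ⟨_, rfl⟩
      rw [hsplit, theta_mul, theta_ι, map_add,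
        dR k b d hd n (b x (v 0)) (fun l => v l.succ),
        dR' k b d hd n (v 0) (theta_mem k b x (fun l => v l.succ)),
        ih x _ hmemP,
        dR k b d hd n (v 0) (fun l => v l.succ),
        map_sub, map_neg, theta_mul, theta_ι]
      have hcomm := theta_comm b hb hj x (v 0) (List.ofFn fun l => ι k (v l.succ)).prod
      rw [sub_eq_iff_eq_add] at hcomm
      rw [hcomm]
      abel
    | zero => simp
    | add u w hu hw ihu ihw => simp only [map_add, ihu, ihw]
    | smul c u hu ihu => simp only [map_smul, ihu]

theorem dC
    (hd : ∀ (n : ℕ) (v : Fin n → V),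
      d n (List.ofFn fun l => ExteriorAlgebra.ι k (v l)).prod =
        ∑ p : Fin n × Fin n,
          if p.1 < p.2 then
            ((-1 : k) ^ ((p.1 : ℕ) + (p.2 : ℕ))) •
              (ExteriorAlgebra.ι k (b (v p.1) (v p.2)) *
                (((List.ofFn fun l => ExteriorAlgebra.ι k (v l)).eraseIdx
                  (p.2 : ℕ)).eraseIdx (p.1 : ℕ)).prod)
          else 0)
    (hb : ∀ v : V, b v v = 0)
    (hj : ∀ x y z : V, b (b x y) z + b (b y z) x + b (b z x) y = 0) :
    ∀ (n : ℕ) (W : ExteriorAlgebra k V), W ∈ Sp k n → d (n - 1) (d n W) = 0 := by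
  intro n
  induction n with
  | zero =>
    intro W hW
    induction hW using Submodule.span_induction with
    | mem w hw =>
      obtain ⟨v, rfl⟩ := hw
      dsimp only
      have h0 : (List.ofFn fun l => ι k (v l)).prod = 1 := by simp
      rw [h0, d_zero_one k b d hd, map_zero]
    | zero => simp
    | add u w hu hw ihu ihw => simp only [map_add, ihu, ihw, add_zero]
    | smul c u hu ihu => simp only [map_smul, ihu, smul_zero]
  | succ n ih =>
    intro W hW
    induction hW using Submodule.span_induction with
    | mem w hw =>
      obtain ⟨v, rfl⟩ := hw
      dsimp only
      have hsplit : (List.ofFn fun l => ι k (v l)).prod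
          = ι k (v 0) * (List.ofFn fun l => ι k (v l.succ)).prod := by
        rw [List.ofFn_succ, List.prod_cons]
      rw [hsplit, dR k b d hd n (v 0) (fun l => v l.succ), map_sub, map_neg]
      simp only [Nat.add_sub_cancel]
      cases n with
      | zero =>
        have h1 : (List.ofFn fun l : Fin 0 => ι k (v l.succ)).prod = 1 := by simp
        rw [h1, theta_one, d_zero_one k b d hd]
        simp
      | succ m =>
        have hD : d (m + 1) (List.ofFn fun l => ι k (v l.succ)).prod ∈ Sp k m :=
          d_mem k b d hd (m + 1) (fun l => v l.succ)
        rw [dR' k b d hd m (v 0) hD]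
        have ihP : d m (d (m + 1) (List.ofFn fun l => ι k (v l.succ)).prod) = 0 :=
          ih _ (Submodule.subset_span ⟨_, rfl⟩)
        rw [ihP, dE k b d hd hb hj (m + 1) (v 0) _ (Submodule.subset_span ⟨_, rfl⟩)]
        simp
    | zero => simp
    | add u w hu hw ihu ihw => simp only [map_add, ihu, ihw, add_zero]
    | smul c u hu ihu => simp only [map_smul, ihu, smul_zero]

end main

end CEAux

theorem chevalleyEilenberg_boundary_sq_zero_iff_jacobi
    (k V : Type*) [Field k] [CharZero k] [AddCommGroup V] [Module k V]
    (b : V →ₗ[k] V →ₗ[k] V) (hb : ∀ v : V, b v v = 0)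
    (d : ℕ → ExteriorAlgebra k V →ₗ[k] ExteriorAlgebra k V)
    (hd : ∀ (n : ℕ) (v : Fin n → V),
      d n (List.ofFn fun l => ExteriorAlgebra.ι k (v l)).prod =
        ∑ p : Fin n × Fin n,
          if p.1 < p.2 then
            ((-1 : k) ^ ((p.1 : ℕ) + (p.2 : ℕ))) •
              (ExteriorAlgebra.ι k (b (v p.1) (v p.2)) *
                (((List.ofFn fun l => ExteriorAlgebra.ι k (v l)).eraseIdx
                  (p.2 : ℕ)).eraseIdx (p.1 : ℕ)).prod)
          else 0) :
    (∀ n : ℕ, 2 ≤ n → ∀ v : Fin n → V,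
        d (n - 1) (d n (List.ofFn fun l => ExteriorAlgebra.ι k (v l)).prod) = 0) ↔
      ∀ x y z : V, b (b x y) z + b (b y z) x + b (b z x) y = 0 := by
  constructor
  · intro H x y z
    have h2 : ∀ a c : V, d 2 (ExteriorAlgebra.ι k a * ExteriorAlgebra.ι k c)
        = -(ExteriorAlgebra.ι k (b a c)) := by
      intro a c
      have key := hd 2 ![a, c]
      simp [Fintype.sum_prod_type, Fin.sum_univ_succ] at key
      exact key
    have h3 := H 3 (by norm_num) ![x, y, z]
    rw [hd 3 ![x, y, z]] at h3
    simp only [Fintype.sum_prod_type, Fin.sum_univ_succ, map_add, map_smul] at h3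
    simp [h2, show ((-1 : k)) ^ 3 = -1 by norm_num, neg_smul, neg_neg] at h3
    have hzx : b (b z x) y = -(b (b x z) y) := by
      rw [CEAux.skew b hb z x, map_neg, LinearMap.neg_apply]
    rw [hzx]
    have h4 : ExteriorAlgebra.ι k (b (b x y) z + b (b y z) x + -(b (b x z) y)) = 0 := by
      rw [map_add, map_add, map_neg, ← h3]
      abel
    exact (ExteriorAlgebra.ι_eq_zero_iff _).mp h4
  · intro hj n hn v
    exact CEAux.dC k b d hd hb hj n _ (Submodule.subset_span ⟨v, rfl⟩)
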